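/- Let d1, d2, K, β be positive real numbers with β > β0 = 8(d1+d2)/K and set b = √(1 - 8(d1+d2)/(K·β)). Then the Jacobian matrix A(f₊,m₊) has negative trace and positive determinant, and consequently every complex root of its characteristic polynomial has negative real part. -/

import Mathlib

open Polynomial

/-- For `β > β₀ = 8(d₁+d₂)/K` and `b = √(1 - 8(d₁+d₂)/(K·β))`, the Jacobian
matrix `A(f₊,m₊)` has negative trace and positive determinant, and every complex root of its
characteristic polynomial has negative real part. -/
theorem stmt11 (d1 d2 K β : ℝ) (hd1 : 0 < d1) (hd2 : 0 < d2) (hK : 0 < K) (hβ : 0 < β)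
    (hβ0 : β > 8 * (d1 + d2) / K) (b : ℝ) (hb : b = Real.sqrt (1 - 8 * (d1 + d2) / (K * β)))
    (fp mp : ℝ)
    (hfp : fp = K * d2 * (1 + b) / (2 * (d1 + d2))) (hmp : mp = K * d1 * (1 + b) / (2 * (d1 + d2)))
    (A : Matrix (Fin 2) (Fin 2) ℝ)
    (hA : A =
      !![β * mp / 2 * ((1 - (fp + mp) / K) - fp / K) - d1, β * fp / 2 * ((1 - (fp + mp) / K) - mp / K);
         β * mp / 2 * ((1 - (fp + mp) / K) - fp / K), β * fp / 2 * ((1 - (fp + mp) / K) - mp / K) - d2]) :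
    A.trace < 0 ∧ 0 < A.det ∧
    ∀ z : ℂ, (A.charpoly.map (algebraMap ℝ ℂ)).IsRoot z → z.re < 0 := by
  have hs : 0 < d1 + d2 := by linarith
  have hKβ : 0 < K * β := mul_pos hK hβ
  have harg : 0 < 1 - 8 * (d1 + d2) / (K * β) := by
    rw [sub_pos, div_lt_one hKβ]
    calc 8 * (d1 + d2) = 8 * (d1 + d2) / K * K := by field_simp
    _ < β * K := by exact mul_lt_mul_of_pos_right hβ0 hK
    _ = K * β := mul_comm _ _
  have hb0 : 0 < b := hb ▸ Real.sqrt_pos.mpr harg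
  have hb2 : b ^ 2 = 1 - 8 * (d1 + d2) / (K * β) := by
    rw [hb, sq, Real.mul_self_sqrt harg.le]
  have hb1 : b < 1 := by
    nlinarith [div_pos (by positivity : (0:ℝ) < 8 * (d1 + d2)) hKβ]
  have hkey : β * K * (1 - b ^ 2) = 8 * (d1 + d2) := by
    rw [hb2]; field_simp; ring
  have hne_s : (d1 + d2) ≠ 0 := ne_of_gt hs
  have hne_K : K ≠ 0 := ne_of_gt hK
  have h1b : 0 < 1 - b := by linarith
  have hne_1b : (1 - b) ≠ 0 := ne_of_gt h1b
  have hBK : β * K * (1 + b) = 8 * (d1 + d2) / (1 - b) := by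
    rw [eq_div_iff hne_1b]; linear_combination hkey
  have hX : β * mp / 2 * ((1 - (fp + mp) / K) - fp / K)
      = β * K * (1 + b) * (d1 * (d1 * (1 - b) - 2 * d2 * b)) / (8 * (d1 + d2) ^ 2) := by
    rw [hfp, hmp]; field_simp; ring
  have hY : β * fp / 2 * ((1 - (fp + mp) / K) - mp / K)
      = β * K * (1 + b) * (d2 * (d2 * (1 - b) - 2 * d1 * b)) / (8 * (d1 + d2) ^ 2) := by
    rw [hfp, hmp]; field_simp; ring
  have htr : A.trace = -(2 * d1 * d2 * (1 + b)) / ((d1 + d2) * (1 - b)) := by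
    rw [hA, Matrix.trace_fin_two_of, hX, hY, hBK]
    field_simp; ring
  have hdet : A.det = 2 * d1 * d2 * b / (1 - b) := by
    rw [hA, Matrix.det_fin_two_of, hX, hY, hBK]
    field_simp; ring
  have htrneg : A.trace < 0 := by
    rw [htr]
    apply div_neg_of_neg_of_pos
    · have : 0 < 2 * d1 * d2 * (1 + b) := by positivity
      linarith
    · positivity
  have hdetpos : 0 < A.det := by
    rw [hdet]; positivity
  refine ⟨htrneg, hdetpos, ?_⟩
  have hcp : A.charpoly = X ^ 2 - C A.trace * X + C A.det := by
    rw [Matrix.charpoly, Matrix.det_fin_two, Matrix.trace_fin_two, Matrix.det_fin_two,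
      Matrix.charmatrix_apply_eq, Matrix.charmatrix_apply_eq,
      Matrix.charmatrix_apply_ne _ _ _ (by decide : (0:Fin 2) ≠ 1),
      Matrix.charmatrix_apply_ne _ _ _ (by decide : (1:Fin 2) ≠ 0)]
    simp only [map_add, map_mul, map_sub]
    ring
  intro z hz
  set t := A.trace with ht
  set d := A.det with hd
  have heq : z * z - (t : ℂ) * z + (d : ℂ) = 0 := by
    have h := hz
    rw [hcp] at h
    simp only [Polynomial.IsRoot, Polynomial.eval_map, Polynomial.eval₂_add,
      Polynomial.eval₂_sub, Polynomial.eval₂_mul, Polynomial.eval₂_X_pow,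
      Polynomial.eval₂_C, Polynomial.eval₂_X] at h
    have halg : ∀ x : ℝ, algebraMap ℝ ℂ x = (x : ℂ) := fun x => rfl
    rw [halg, halg] at h
    linear_combination h
  have h1 := congrArg Complex.re heq
  have h2 := congrArg Complex.im heq
  simp only [Complex.add_re, Complex.sub_re, Complex.mul_re, Complex.mul_im, Complex.ofReal_re,
    Complex.ofReal_im, Complex.zero_re] at h1
  simp only [Complex.add_im, Complex.sub_im, Complex.mul_re, Complex.mul_im, Complex.ofReal_re,
    Complex.ofReal_im, Complex.zero_im] at h2
  have hre : z.re * z.re - z.im * z.im - t * z.re + d = 0 := by linear_combination h1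
  have him : z.im * (2 * z.re - t) = 0 := by linear_combination h2
  clear hX hY hA hcp hz heq h1 h2 hb hfp hmp hb2 hkey hBK harg hβ0 htr hdet
  rcases mul_eq_zero.mp him with h | h
  · rw [h] at hre
    by_contra hx
    push_neg at hx
    nlinarith [mul_nonneg hx (by linarith : (0:ℝ) ≤ -t), hdetpos, mul_self_nonneg z.re]
  · have : z.re = t / 2 := by linarith
    rw [this]
    linarith
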